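/- Let S ⊂ [0,1) be a finite set with |S| ≥ 2 and suppose that |τ − τ'|_T ≥ Δ > 0 for all distinct τ, τ' ∈ S. Then for every τ ∈ S one has Σ_{τ' ∈ S, τ' ≠ τ} 1/|τ − τ'|_T ≤ 2(1 + log|S|)/Δ. -/

import Mathlib

/-- The wrap-around (modulo 1) distance `|x|_T = min_{m ∈ ℤ} |x − m|`. -/
noncomputable def torusDist (x : ℝ) : ℝ :=
  sInf (Set.range fun m : ℤ => |x - (m : ℝ)|)

lemma abs_sub_round_le_abs_sub (x : ℝ) (m : ℤ) : |x - round x| ≤ |x - (m : ℝ)| := by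
  rcases eq_or_ne m (round x) with rfl | h
  · rfl
  · have h1 : (1 : ℝ) ≤ |(m : ℝ) - round x| := by
      have h2 : (1 : ℤ) ≤ |m - round x| := Int.one_le_abs (sub_ne_zero.mpr h)
      calc (1 : ℝ) ≤ ((|m - round x| : ℤ) : ℝ) := by exact_mod_cast h2
        _ = |(m : ℝ) - round x| := by push_cast [Int.cast_abs]; norm_num
    have h2 : |x - round x| ≤ 1/2 := abs_sub_round x
    have h3 : |(m : ℝ) - round x| ≤ |x - round x| + |x - (m : ℝ)| := by
      calc |(m : ℝ) - round x| = |(x - round x) - (x - m)| := by congr 1; ring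
        _ ≤ |x - round x| + |x - (m : ℝ)| := abs_sub _ _
    linarith

lemma torusDist_eq (x : ℝ) : torusDist x = |x - round x| := by
  unfold torusDist
  apply le_antisymm
  · exact csInf_le ⟨0, by rintro y ⟨m, rfl⟩; positivity⟩ ⟨round x, rfl⟩
  · refine le_csInf ⟨|x - ((round x : ℤ) : ℝ)|, ⟨round x, rfl⟩⟩ ?_
    rintro y ⟨m, rfl⟩
    exact abs_sub_round_le_abs_sub x m

lemma torusDist_sub_int (x : ℝ) (m : ℤ) : torusDist (x - m) = torusDist x := by
  rw [torusDist_eq, torusDist_eq, round_sub_intCast]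
  push_cast
  ring_nf

lemma torusDist_eq_abs_of_le_half {x : ℝ} (h : |x| ≤ 1/2) : torusDist x = |x| := by
  apply le_antisymm
  · calc torusDist x = |x - round x| := torusDist_eq x
      _ ≤ |x - ((0 : ℤ) : ℝ)| := abs_sub_round_le_abs_sub x 0
      _ = |x| := by norm_num
  · rw [torusDist_eq]
    rcases eq_or_ne (round x) 0 with h0 | h0
    · rw [h0]; simp
    · have h1 : (1 : ℝ) ≤ |((round x : ℤ) : ℝ)| := by
        have h2 : (1 : ℤ) ≤ |round x| := Int.one_le_abs h0
        calc (1 : ℝ) ≤ ((|round x| : ℤ) : ℝ) := by exact_mod_cast h2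
          _ = |((round x : ℤ) : ℝ)| := by rw [Int.cast_abs]
      have h3 : |((round x : ℤ) : ℝ)| ≤ |x| + |x - round x| := by
        calc |((round x : ℤ) : ℝ)| = |x - (x - round x)| := by congr 1; ring
          _ ≤ |x| + |x - round x| := abs_sub _ _
      linarith

lemma harmonic_monotone : Monotone harmonic := by
  intro m n h
  unfold harmonic
  apply Finset.sum_le_sum_of_subset_of_nonneg (Finset.range_subset_range.mpr h)
  intro i _ _
  positivity

/-- The maximum of a Δ-separated finset of reals all `≥ Δ` is at least `card * Δ`. -/
lemma max_ge_card_mul (Δ : ℝ) (hΔ : 0 < Δ) :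
    ∀ (n : ℕ) (T : Finset ℝ), T.card = n → (hne : T.Nonempty) →
    (∀ a ∈ T, Δ ≤ a) → (∀ a ∈ T, ∀ b ∈ T, a ≠ b → Δ ≤ |a - b|) →
    (n : ℝ) * Δ ≤ T.max' hne := by
  intro n
  induction n with
  | zero => intro T hc hne _ _; simp [Finset.card_eq_zero] at hc; simp [hc] at hne
  | succ k ih =>
    intro T hc hne hlb hsep
    rcases Nat.eq_zero_or_pos k with hk | hk
    · subst hk
      simpa using hlb _ (T.max'_mem hne)
    · set M := T.max' hne with hM
      have hMmem : M ∈ T := T.max'_mem hne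
      set T' := T.erase M with hT'
      have hc' : T'.card = k := by rw [hT', Finset.card_erase_of_mem hMmem, hc]; omega
      have hne' : T'.Nonempty := Finset.card_pos.mp (by omega)
      have hsub : T' ⊆ T := Finset.erase_subset _ _
      have hIH : (k : ℝ) * Δ ≤ T'.max' hne' :=
        ih T' hc' hne' (fun a ha => hlb a (hsub ha))
          (fun a ha b hb hab => hsep a (hsub ha) b (hsub hb) hab)
      set M' := T'.max' hne' with hM'
      have hM'mem : M' ∈ T' := T'.max'_mem hne'
      have hM'ne : M' ≠ M := (Finset.mem_erase.mp hM'mem).1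
      have hM'le : M' ≤ M := T.le_max' M' (hsub hM'mem)
      have hsep' : Δ ≤ |M' - M| := hsep M' (hsub hM'mem) M hMmem hM'ne
      rw [abs_sub_comm, abs_of_nonneg (by linarith)] at hsep'
      push_cast
      linarith

/-- Sum of reciprocals of a Δ-separated finset of reals all `≥ Δ` is at most
`harmonic card / Δ`. -/
lemma sum_inv_le_harmonic (Δ : ℝ) (hΔ : 0 < Δ) :
    ∀ (n : ℕ) (T : Finset ℝ), T.card = n →
    (∀ a ∈ T, Δ ≤ a) → (∀ a ∈ T, ∀ b ∈ T, a ≠ b → Δ ≤ |a - b|) →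
    ∑ a ∈ T, 1 / a ≤ (harmonic n : ℝ) / Δ := by
  intro n
  induction n with
  | zero =>
    intro T hc _ _
    rw [Finset.card_eq_zero] at hc
    simp [hc]
  | succ k ih =>
    intro T hc hlb hsep
    have hne : T.Nonempty := Finset.card_pos.mp (by omega)
    set M := T.max' hne with hM
    have hMmem : M ∈ T := T.max'_mem hne
    have hMlb : ((k : ℝ) + 1) * Δ ≤ M := by
      have := max_ge_card_mul Δ hΔ (k + 1) T hc hne hlb hsep
      push_cast at this; linarith
    have hMpos : 0 < M := lt_of_lt_of_le (by positivity) hMlb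
    set T' := T.erase M with hT'
    have hc' : T'.card = k := by rw [hT', Finset.card_erase_of_mem hMmem, hc]; omega
    have hsub : T' ⊆ T := Finset.erase_subset _ _
    have hIH : ∑ a ∈ T', 1 / a ≤ (harmonic k : ℝ) / Δ :=
      ih T' hc' (fun a ha => hlb a (hsub ha))
        (fun a ha b hb hab => hsep a (hsub ha) b (hsub hb) hab)
    have hsplit : ∑ a ∈ T, 1 / a = 1 / M + ∑ a ∈ T', 1 / a := by
      rw [hT', Finset.add_sum_erase _ _ hMmem]
    have h1M : 1 / M ≤ 1 / (((k : ℝ) + 1) * Δ) :=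
      one_div_le_one_div_of_le (by positivity) hMlb
    have hharm : (harmonic (k + 1) : ℝ) = (harmonic k : ℝ) + 1 / ((k : ℝ) + 1) := by
      rw [harmonic_succ]; push_cast; ring
    have heq : 1 / (((k : ℝ) + 1) * Δ) = (1 / ((k : ℝ) + 1)) / Δ := by
      field_simp
    rw [hsplit, hharm, add_div]
    linarith [h1M, hIH]

/-- One side of the circle: sum of reciprocals of an injective Δ-separated family. -/
lemma side_sum_le (Δ : ℝ) (hΔ : 0 < Δ) (F : Finset ℝ) (g : ℝ → ℝ)
    (hinj : ∀ a ∈ F, ∀ b ∈ F, g a = g b → a = b)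
    (hlb : ∀ a ∈ F, Δ ≤ g a)
    (hsep : ∀ a ∈ F, ∀ b ∈ F, a ≠ b → Δ ≤ |g a - g b|) :
    ∑ a ∈ F, 1 / g a ≤ (harmonic F.card : ℝ) / Δ := by
  classical
  have hsum : ∑ x ∈ F.image g, 1 / x = ∑ a ∈ F, 1 / g a :=
    Finset.sum_image (fun a ha b hb hab => hinj a ha b hb hab)
  have hcardim : (F.image g).card = F.card :=
    Finset.card_image_of_injOn (fun a ha b hb hab => hinj a ha b hb hab)
  rw [← hsum, ← hcardim]
  apply sum_inv_le_harmonic Δ hΔ (F.image g).card (F.image g) rfl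
  · intro x hx
    obtain ⟨a, ha, rfl⟩ := Finset.mem_image.mp hx
    exact hlb a ha
  · intro x hx y hy hxy
    obtain ⟨a, ha, rfl⟩ := Finset.mem_image.mp hx
    obtain ⟨b, hb, rfl⟩ := Finset.mem_image.mp hy
    exact hsep a ha b hb (fun h => hxy (by rw [h]))

/-- If `S ⊂ [0,1)` has at least two points and all distinct points of `S` are at
wrap-around distance at least `Δ > 0`, then for every `τ ∈ S`,
`∑_{τ' ∈ S, τ' ≠ τ} 1/|τ − τ'|_T ≤ 2(1 + log|S|)/Δ`. -/
theorem separated_inverse_distance_sum (S : Finset ℝ) (hS : ↑S ⊆ Set.Ico (0 : ℝ) 1)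
    (hcard : 2 ≤ S.card) (Δ : ℝ) (hΔ : 0 < Δ)
    (hsep : ∀ τ ∈ S, ∀ τ' ∈ S, τ ≠ τ' → Δ ≤ torusDist (τ - τ'))
    (τ : ℝ) (hτ : τ ∈ S) :
    ∑ τ' ∈ S.erase τ, 1 / torusDist (τ - τ') ≤ 2 * (1 + Real.log S.card) / Δ := by
  classical
  set n := S.card with hn
  set s : ℝ → ℝ := fun y => (τ - y) - round (τ - y) with hs
  have hsabs : ∀ y, torusDist (τ - y) = |s y| := fun y => torusDist_eq (τ - y)
  have hsbound : ∀ y, |s y| ≤ 1/2 := fun y => abs_sub_round (τ - y)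
  clear_value s
  set E := S.erase τ with hE
  have hEsub : E ⊆ S := Finset.erase_subset _ _
  -- lower bound on |s| on E
  have hslb : ∀ y ∈ E, Δ ≤ |s y| := by
    intro y hy
    obtain ⟨hne, hyS⟩ := Finset.mem_erase.mp hy
    have := hsep τ hτ y hyS (Ne.symm hne)
    rwa [hsabs] at this
  -- injectivity of s on S
  have hsinj : ∀ a ∈ S, ∀ b ∈ S, s a = s b → a = b := by
    intro a ha b hb hab
    have haI := hS ha
    have hbI := hS hb
    have hint : b - a = ((round (τ - a) - round (τ - b) : ℤ) : ℝ) := by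
      simp only [hs] at hab; push_cast; linarith
    have habs : |b - a| < 1 := by
      rw [abs_lt]
      exact ⟨by linarith [haI.1, haI.2, hbI.1, hbI.2],
             by linarith [haI.1, haI.2, hbI.1, hbI.2]⟩
    rw [hint] at habs
    have hz : round (τ - a) - round (τ - b) = 0 := by
      have h1 := abs_lt.mp habs
      have h1' : -(1 : ℤ) < round (τ - a) - round (τ - b) := by exact_mod_cast h1.1
      have h2' : round (τ - a) - round (τ - b) < 1 := by exact_mod_cast h1.2
      omega
    have : ((round (τ - a) - round (τ - b) : ℤ) : ℝ) = 0 := by exact_mod_cast hz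
    linarith [hint ▸ this]
  -- same-side separation
  have hsepS : ∀ a ∈ S, ∀ b ∈ S, a ≠ b → |s a - s b| ≤ 1/2 → Δ ≤ |s a - s b| := by
    intro a ha b hb hab hhalf
    have key : torusDist (s a - s b) = torusDist (b - a) := by
      have heq : s a - s b = (b - a) - ((round (τ - a) - round (τ - b) : ℤ) : ℝ) := by
        simp only [hs]; push_cast; ring
      rw [heq, torusDist_sub_int]
    have hΔ' : Δ ≤ torusDist (b - a) := hsep b hb a ha (Ne.symm hab)
    rw [← key, torusDist_eq_abs_of_le_half hhalf] at hΔ'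
    exact hΔ'
  -- split into sides
  set P := E.filter (fun y => 0 < s y) with hP
  set N := E.filter (fun y => ¬ 0 < s y) with hN
  have hsplit : ∑ y ∈ E, 1 / torusDist (τ - y) =
      (∑ y ∈ P, 1 / torusDist (τ - y)) + ∑ y ∈ N, 1 / torusDist (τ - y) :=
    (Finset.sum_filter_add_sum_filter_not E _ _).symm
  -- positive side
  have hPbound : ∑ y ∈ P, 1 / torusDist (τ - y) ≤ (harmonic P.card : ℝ) / Δ := by
    have hPsub : P ⊆ E := Finset.filter_subset _ _
    have heq : ∀ y ∈ P, 1 / torusDist (τ - y) = 1 / s y := by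
      intro y hy
      rw [hsabs, abs_of_pos (Finset.mem_filter.mp hy).2]
    rw [Finset.sum_congr rfl heq]
    apply side_sum_le Δ hΔ P s
    · exact fun a ha b hb => hsinj a (hEsub (hPsub ha)) b (hEsub (hPsub hb))
    · intro a ha
      have := hslb a (hPsub ha)
      rwa [abs_of_pos (Finset.mem_filter.mp ha).2] at this
    · intro a ha b hb hab
      have hap : 0 < s a := (Finset.mem_filter.mp ha).2
      have hbp : 0 < s b := (Finset.mem_filter.mp hb).2
      have h1 : s a ≤ 1/2 := (abs_le.mp (hsbound a)).2
      have h2 : s b ≤ 1/2 := (abs_le.mp (hsbound b)).2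
      exact hsepS a (hEsub (hPsub ha)) b (hEsub (hPsub hb)) hab
        (abs_le.mpr ⟨by linarith, by linarith⟩)
  -- negative side
  have hNbound : ∑ y ∈ N, 1 / torusDist (τ - y) ≤ (harmonic N.card : ℝ) / Δ := by
    have hNsub : N ⊆ E := Finset.filter_subset _ _
    have hNneg : ∀ y ∈ N, s y < 0 := by
      intro y hy
      have h0 : ¬ 0 < s y := (Finset.mem_filter.mp hy).2
      have := hslb y (hNsub hy)
      rcases lt_or_eq_of_le (not_lt.mp h0) with h | h
      · exact h
      · exfalso; rw [h] at this; simp at this; linarith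
    have heq : ∀ y ∈ N, 1 / torusDist (τ - y) = 1 / (-(s y)) := by
      intro y hy
      rw [hsabs, abs_of_neg (hNneg y hy)]
    rw [Finset.sum_congr rfl heq]
    apply side_sum_le Δ hΔ N (fun y => -(s y))
    · intro a ha b hb hab
      exact hsinj a (hEsub (hNsub ha)) b (hEsub (hNsub hb)) (by linarith)
    · intro a ha
      have := hslb a (hNsub ha)
      rwa [abs_of_neg (hNneg a ha)] at this
    · intro a ha b hb hab
      have hap : s a < 0 := hNneg a ha
      have hbp : s b < 0 := hNneg b hb
      have h1 : -(1/2) ≤ s a := (abs_le.mp (hsbound a)).1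
      have h2 : -(1/2) ≤ s b := (abs_le.mp (hsbound b)).1
      have := hsepS a (hEsub (hNsub ha)) b (hEsub (hNsub hb)) hab
        (abs_le.mpr ⟨by linarith, by linarith⟩)
      calc Δ ≤ |s a - s b| := this
        _ = |(-(s a)) - (-(s b))| := by rw [← abs_neg]; ring_nf
  -- combine
  have hPcard : P.card ≤ n :=
    le_trans (Finset.card_le_card (Finset.filter_subset _ _)) (Finset.card_le_card hEsub)
  have hNcard : N.card ≤ n :=
    le_trans (Finset.card_le_card (Finset.filter_subset _ _)) (Finset.card_le_card hEsub)
  have hbound : ∀ m : ℕ, m ≤ n → (harmonic m : ℝ) ≤ 1 + Real.log n := by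
    intro m hm
    calc (harmonic m : ℝ) ≤ (harmonic n : ℝ) := by
          exact_mod_cast harmonic_monotone hm
      _ ≤ 1 + Real.log n := harmonic_le_one_add_log n
  have hPfin : ∑ y ∈ P, 1 / torusDist (τ - y) ≤ (1 + Real.log n) / Δ :=
    hPbound.trans ((div_le_div_iff_of_pos_right hΔ).mpr (hbound _ hPcard))
  have hNfin : ∑ y ∈ N, 1 / torusDist (τ - y) ≤ (1 + Real.log n) / Δ :=
    hNbound.trans ((div_le_div_iff_of_pos_right hΔ).mpr (hbound _ hNcard))
  have hfinal : 2 * (1 + Real.log n) / Δ = (1 + Real.log n) / Δ + (1 + Real.log n) / Δ := by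
    ring
  calc ∑ τ' ∈ S.erase τ, 1 / torusDist (τ - τ')
      = (∑ y ∈ P, 1 / torusDist (τ - y)) + ∑ y ∈ N, 1 / torusDist (τ - y) := hsplit
    _ ≤ (1 + Real.log n) / Δ + (1 + Real.log n) / Δ := add_le_add hPfin hNfin
    _ = 2 * (1 + Real.log n) / Δ := hfinal.symm
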